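/- Let G(z) = H_d·H_{d−1}⋯H₁·z be a d-layer linear generator where each Hᵢ has i.i.d. standard Gaussian entries, nᵢ ≥ k for i < d, and n = n_d > k. Let M ∈ ℝ^{m×n} be an independent random matrix with i.i.d. standard Gaussian entries. If l ≤ (m − 1 − k)/2, then with probability 1 the following holds: for every z₀ ∈ ℝᵏ and every e ∈ ℝᵐ with ‖e‖₀ ≤ l, setting y = M·G(z₀) + e, the vector z₀ is the unique minimizer of ‖M·G(z) − y‖₀ over z ∈ ℝᵏ. -/

import Mathlib

open MeasureTheory ProbabilityTheory

instance matrixMeasurableSpace (p q : ℕ) : MeasurableSpace (Matrix (Fin p) (Fin q) ℝ) :=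
  MeasurableSpace.pi

/-- The distribution of a `p × q` random matrix with i.i.d. standard Gaussian
entries. -/
noncomputable def gaussMatrix (p q : ℕ) : Measure (Matrix (Fin p) (Fin q) ℝ) :=
  Measure.pi fun _ : Fin p => Measure.pi fun _ : Fin q => gaussianReal 0 1

instance gaussMatrix_prob (p q : ℕ) : IsProbabilityMeasure (gaussMatrix p q) :=
  show IsProbabilityMeasure
    (Measure.pi fun _ : Fin p => Measure.pi fun _ : Fin q => gaussianReal 0 1) from
  inferInstance

/-- The product `H_d ⋯ H_1` of a chain of matrices. -/
def chainProd (dims : ℕ → ℕ) :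
    ∀ d : ℕ, (∀ i : Fin d, Matrix (Fin (dims (i + 1))) (Fin (dims i)) ℝ) →
      Matrix (Fin (dims d)) (Fin (dims 0)) ℝ
  | 0, _ => 1
  | d + 1, H =>
      (show Matrix (Fin (dims (d + 1))) (Fin (dims d)) ℝ from H (Fin.last d)) *
        chainProd dims d (fun i => H i.castSucc)

/-- The ℓ₀ "norm": number of nonzero entries of a vector. -/
noncomputable def l0 {m : ℕ} (v : Fin m → ℝ) : ℕ :=
  (Finset.univ.filter fun i => v i ≠ 0).card

lemma pi_slice_null' {ι : Type*} [Fintype ι] [DecidableEq ι] {α : ι → Type*}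
    [∀ j, MeasurableSpace (α j)] (μ : ∀ j, Measure (α j)) [∀ j, SigmaFinite (μ j)] (i : ι)
    [Nonempty (α i)] {s : Set (∀ j, α j)} (hs : MeasurableSet s)
    (h : ∀ f : ∀ j, α j, μ i {x | Function.update f i x ∈ s} = 0) :
    Measure.pi μ s = 0 := by
  classical
  set p : ι → Prop := fun j => j ≠ i with hp
  letI hu : Unique {j // ¬ p j} := ⟨⟨⟨i, by simp [p]⟩⟩, fun j => Subtype.ext (not_not.mp j.2)⟩
  have MP := measurePreserving_piEquivPiSubtypeProd μ p
  set e := MeasurableEquiv.piEquivPiSubtypeProd α p with he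
  have hst : s = ⇑e ⁻¹' (⇑e.symm ⁻¹' s) := by ext x; simp
  have hmt : MeasurableSet (⇑e.symm ⁻¹' s) := e.symm.measurable hs
  rw [hst, MP.measure_preimage hmt.nullMeasurableSet, Measure.prod_apply hmt]
  have key : ∀ a : ∀ j : {j // p j}, α j,
      (Measure.pi fun j : {j // ¬ p j} => μ j) (Prod.mk a ⁻¹' (⇑e.symm ⁻¹' s)) = 0 := by
    intro a
    set F : α i → (∀ j, α j) :=
      fun x j => if h : p j then a ⟨j, h⟩ else cast (congrArg α (not_not.mp h).symm) x with hF
    have hFm : Measurable F := by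
      apply measurable_pi_lambda
      intro j
      by_cases hj : p j
      · simp only [hF, dif_pos hj]; exact measurable_const
      · have hji : j = i := not_not.mp hj
        subst hji
        have : (fun x : α j => F x j) = id := by
          funext x
          simp only [hF, dif_neg hj, id]
          exact eq_of_heq (cast_heq _ _)
        simp only [hF] at this ⊢
        rw [this]
        exact measurable_id
    have hFu : ∀ x : α i, F x = Function.update (F (Classical.arbitrary (α i))) i x := by
      intro x; funext j
      by_cases hj : j = i
      · subst hj
        rw [Function.update_self]
        simp only [hF, dif_neg (show ¬ p j by simp [hp])]
        exact eq_of_heq (cast_heq _ _)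
      · rw [Function.update_of_ne hj]
        simp only [hF, dif_pos (show p j from hj)]
    have hFs : μ i (F ⁻¹' s) = 0 := by
      have : F ⁻¹' s = {x | Function.update (F (Classical.arbitrary (α i))) i x ∈ s} := by
        ext x; simp [Set.mem_preimage, hFu x]
      rw [this]; exact h _
    have hpre : Prod.mk a ⁻¹' (⇑e.symm ⁻¹' s)
        = ⇑(MeasurableEquiv.piUnique (fun j : {j // ¬ p j} => α j)) ⁻¹' (F ⁻¹' s) := by
      ext b
      have hb : e.symm (a, b) = F (cast (congrArg (fun j : {j // ¬ p j} => α j.1)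
          (Subsingleton.elim (default : {j // ¬ p j}) ⟨i, by simp [hp]⟩)) (b default)) := by
        funext j
        by_cases hj : p j
        · simp only [he, MeasurableEquiv.piEquivPiSubtypeProd, Equiv.piEquivPiSubtypeProd,
            MeasurableEquiv.coe_mk, Equiv.coe_fn_symm_mk, MeasurableEquiv.symm_mk, hF]
          simp [hp, hj, show j ≠ i from hj]
        · have hji : j = i := not_not.mp hj
          subst hji
          simp only [he, MeasurableEquiv.piEquivPiSubtypeProd, Equiv.piEquivPiSubtypeProd,
            MeasurableEquiv.coe_mk, Equiv.coe_fn_symm_mk, MeasurableEquiv.symm_mk, hF]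
          rw [dif_neg hj, dif_neg hj]
          apply eq_of_heq
          refine HEq.trans ?_ (cast_heq _ _).symm
          have hd : (default : {j' // ¬ p j'}) = ⟨j, hj⟩ := Subsingleton.elim _ _
          rw [hd]
          exact (cast_heq _ _).symm
      rw [Set.mem_preimage, Set.mem_preimage, hb]
      rw [Set.mem_preimage]
      constructor
      · intro hmem
        exact hmem
      · intro hmem
        exact hmem
    rw [hpre, (measurePreserving_piUnique (fun j : {j // ¬ p j} => μ j)).measure_preimage
        (hFm hs).nullMeasurableSet]
    exact hFs
  rw [lintegral_congr key, lintegral_zero]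

lemma prod_null_right {α β : Type*} [MeasurableSpace α] [MeasurableSpace β]
    (μ : Measure α) (ν : Measure β) [SFinite μ] [SFinite ν] {s : Set (α × β)}
    (hs : MeasurableSet s) (h : ∀ᵐ y ∂ν, μ {x | (x, y) ∈ s} = 0) :
    (μ.prod ν) s = 0 := by
  have hswap : (μ.prod ν) s = (ν.prod μ) (Prod.swap ⁻¹' s) := by
    rw [← Measure.prod_swap, Measure.map_apply measurable_swap hs]
  rw [hswap, Measure.prod_apply (measurable_swap hs)]
  have : ∀ᵐ y ∂ν, μ (Prod.mk y ⁻¹' (Prod.swap ⁻¹' s)) = 0 := by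
    filter_upwards [h] with y hy
    convert hy using 2
    rfl
  rw [lintegral_congr_ae this, lintegral_zero]

/-- A Gaussian vector lies in a fixed hyperplane with probability zero. -/
lemma hyperplane_null {n : ℕ} {w : Fin n → ℝ} (hw : w ≠ 0) :
    (Measure.pi fun _ : Fin n => gaussianReal 0 1) {x : Fin n → ℝ | ∑ t, x t * w t = 0} = 0 := by
  classical
  obtain ⟨t₀, ht₀⟩ : ∃ t, w t ≠ 0 := by
    by_contra hc
    push_neg at hc
    exact hw (funext fun t => hc t)
  have hmeas : MeasurableSet {x : Fin n → ℝ | ∑ t, x t * w t = 0} := by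
    have : Measurable fun x : Fin n → ℝ => ∑ t, x t * w t :=
      Finset.measurable_sum _ fun t _ => (measurable_pi_apply t).mul_const _
    exact this (measurableSet_singleton 0)
  apply pi_slice_null' (fun _ : Fin n => gaussianReal 0 1) t₀ hmeas
  intro f
  have : {x : ℝ | Function.update f t₀ x ∈ {x : Fin n → ℝ | ∑ t, x t * w t = 0}}
      ⊆ {x : ℝ | x = (-(∑ t ∈ Finset.univ \ {t₀}, f t * w t)) / w t₀} := by
    intro x hx
    simp only [Set.mem_setOf_eq] at hx ⊢
    have hsum : ∑ t, Function.update f t₀ x t * w t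
        = x * w t₀ + ∑ t ∈ Finset.univ \ {t₀}, f t * w t := by
      rw [show (fun t => Function.update f t₀ x t * w t)
          = Function.update (fun t => f t * w t) t₀ (x * w t₀) from ?_]
      · exact Finset.sum_update_of_mem (Finset.mem_univ t₀) _ _
      · funext t
        by_cases ht : t = t₀
        · subst ht; simp
        · rw [Function.update_of_ne ht, Function.update_of_ne ht]
    rw [hsum] at hx
    rw [eq_div_iff ht₀]
    linarith
  refine measure_mono_null this ?_
  have : ({x : ℝ | x = (-(∑ t ∈ Finset.univ \ {t₀}, f t * w t)) / w t₀} : Set ℝ)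
      = {(-(∑ t ∈ Finset.univ \ {t₀}, f t * w t)) / w t₀} := rfl
  rw [this]
  exact (gaussianReal_absolutelyContinuous 0 one_ne_zero) Real.volume_singleton

-- measurability combinators
lemma measurable_matrix_entry {a b : ℕ} {β : Type*} [MeasurableSpace β]
    {f : β → Matrix (Fin a) (Fin b) ℝ} (hf : Measurable f) (i : Fin a) (j : Fin b) :
    Measurable fun x => f x i j :=
  ((measurable_pi_apply j).comp ((measurable_pi_apply i).comp hf))

lemma measurable_matrix_of {a b : ℕ} {β : Type*} [MeasurableSpace β]
    {f : β → Matrix (Fin a) (Fin b) ℝ} (hf : ∀ i j, Measurable fun x => f x i j) :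
    Measurable f :=
  measurable_pi_lambda _ fun i => measurable_pi_lambda _ fun j => hf i j

lemma measurable_matrix_mul {a b c : ℕ} {β : Type*} [MeasurableSpace β]
    {f : β → Matrix (Fin a) (Fin b) ℝ} {g : β → Matrix (Fin b) (Fin c) ℝ}
    (hf : Measurable f) (hg : Measurable g) : Measurable fun x => f x * g x := by
  apply measurable_matrix_of
  intro i j
  simp only [Matrix.mul_apply]
  exact Finset.measurable_sum _ fun t _ =>
    (measurable_matrix_entry hf i t).mul (measurable_matrix_entry hg t j)

lemma measurable_matrix_det {a : ℕ} {β : Type*} [MeasurableSpace β]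
    {f : β → Matrix (Fin a) (Fin a) ℝ} (hf : Measurable f) :
    Measurable fun x => (f x).det := by
  simp only [Matrix.det_apply']
  exact Finset.measurable_sum _ fun σ _ =>
    (Finset.measurable_prod _ fun i _ => measurable_matrix_entry hf (σ i) i).const_mul _

lemma measurable_matrix_submatrix {a b p q : ℕ} {β : Type*} [MeasurableSpace β]
    {f : β → Matrix (Fin a) (Fin b) ℝ} (hf : Measurable f) (e₁ : Fin p → Fin a)
    (e₂ : Fin q → Fin b) : Measurable fun x => (f x).submatrix e₁ e₂ :=
  measurable_matrix_of fun i j => measurable_matrix_entry hf (e₁ i) (e₂ j)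

lemma det_null (n p : ℕ) : ∀ (k : ℕ) (A : Matrix (Fin n) (Fin k) ℝ),
    (∀ v, A.mulVec v = 0 → v = 0) → ∀ (e : Fin k → Fin p), Function.Injective e →
    gaussMatrix p n {G | ((G.submatrix e id) * A).det = 0} = 0 := by
  intro k
  induction k with
  | zero =>
    intro A hA e he
    have : {G : Matrix (Fin p) (Fin n) ℝ | ((G.submatrix e id) * A).det = 0} = ∅ := by
      ext G; simp [Matrix.det_fin_zero]
    rw [this]; exact measure_empty
  | succ k IH =>
    intro A hA e he
    classical
    -- injectivity of column-deleted matrices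
    have hAsub : ∀ j : Fin (k+1), ∀ v : Fin k → ℝ,
        (A.submatrix id j.succAbove).mulVec v = 0 → v = 0 := by
      intro j v hv
      set v' : Fin (k+1) → ℝ := j.insertNth (0:ℝ) v with hv'
      have h1 : A.mulVec v' = 0 := by
        funext r
        have hr := congrFun hv r
        simp only [Matrix.mulVec, dotProduct, Matrix.submatrix_apply, id,
          Pi.zero_apply] at hr ⊢
        calc ∑ x : Fin (k+1), A r x * v' x
            = A r j * v' j
              + ∑ x : Fin k, A r (j.succAbove x) * v' (j.succAbove x) :=
              Fin.sum_univ_succAbove _ j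
          _ = 0 := by
              simpa [hv', Fin.insertNth_apply_same, Fin.insertNth_apply_succAbove] using hr
      have h2 := hA _ h1
      funext j'
      have := congrFun h2 (j.succAbove j')
      simpa [hv', Fin.insertNth_apply_succAbove] using this
    set mf : Fin (k+1) → Matrix (Fin p) (Fin n) ℝ → ℝ := fun j G =>
      ((G.submatrix (e ∘ Fin.castSucc) id) * (A.submatrix id j.succAbove)).det with hmf
    have hminor : ∀ (G : Matrix (Fin p) (Fin n) ℝ) (j : Fin (k+1)),
        (((G.submatrix e id) * A).submatrix (Fin.last k).succAbove j.succAbove) =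
          (G.submatrix (e ∘ Fin.castSucc) id) * (A.submatrix id j.succAbove) := by
      intro G j
      rw [Matrix.submatrix_mul (G.submatrix e id) A ((Fin.last k).succAbove) id
        (j.succAbove) Function.bijective_id, Matrix.submatrix_submatrix]
      simp [Fin.succAbove_last]
    have hmeas_mf : ∀ j, Measurable (mf j) := fun j =>
      measurable_matrix_det (measurable_matrix_mul
        (measurable_matrix_submatrix measurable_id _ _) measurable_const)
    have hmeas_det : Measurable fun G : Matrix (Fin p) (Fin n) ℝ =>
        ((G.submatrix e id) * A).det :=
      measurable_matrix_det (measurable_matrix_mul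
        (measurable_matrix_submatrix measurable_id _ _) measurable_const)
    set S : Set (Matrix (Fin p) (Fin n) ℝ) :=
      {G | ∃ j, mf j G ≠ 0} ∩ {G | ((G.submatrix e id) * A).det = 0} with hS
    have hcover : {G : Matrix (Fin p) (Fin n) ℝ | ((G.submatrix e id) * A).det = 0}
        ⊆ {G | mf 0 G = 0} ∪ S := by
      intro G hG
      by_cases hall : ∀ j, mf j G = 0
      · exact Or.inl (hall 0)
      · push_neg at hall
        exact Or.inr ⟨hall, hG⟩
    refine measure_mono_null hcover (measure_union_null ?_ ?_)
    · exact IH (A.submatrix id (Fin.succAbove 0)) (hAsub 0) (e ∘ Fin.castSucc)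
        (he.comp (Fin.castSucc_injective k))
    · -- slice at row e (last)
      have hSmeas : MeasurableSet S := by
        refine MeasurableSet.inter ?_ (hmeas_det (measurableSet_singleton 0))
        have : {G : Matrix (Fin p) (Fin n) ℝ | ∃ j, mf j G ≠ 0}
            = ⋃ j, {G | mf j G ≠ 0} := by ext G; simp
        rw [this]
        exact MeasurableSet.iUnion fun j =>
          ((hmeas_mf j) (measurableSet_singleton 0)).compl
      show Measure.pi (fun _ : Fin p => Measure.pi fun _ : Fin n => gaussianReal 0 1) S = 0
      apply pi_slice_null' (fun _ : Fin p => (Measure.pi fun _ : Fin n => gaussianReal 0 1)) (e (Fin.last k)) hSmeas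
      intro F
      -- minors don't depend on the updated row
      have hsub : ∀ x : Fin n → ℝ,
          Matrix.submatrix (Function.update F (e (Fin.last k)) x) (e ∘ Fin.castSucc) id
            = Matrix.submatrix F (e ∘ Fin.castSucc) id := by
        intro x
        funext r t
        show Function.update F (e (Fin.last k)) x (e (Fin.castSucc r)) t = F (e (Fin.castSucc r)) t
        rw [Function.update_of_ne]
        intro hcontra
        exact (Fin.castSucc_lt_last r).ne (he hcontra)
      have hmfF : ∀ x j, mf j (Function.update F (e (Fin.last k)) x) = mf j F := by
        intro x j; simp only [hmf]; rw [hsub]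
      by_cases hC : ∃ j, mf j F ≠ 0
      · set w : Fin n → ℝ := fun t => ∑ j : Fin (k+1),
          A t j * ((-1 : ℝ) ^ ((Fin.last k : ℕ) + (j : ℕ)) * mf j F) with hw
        have hdet : ∀ x : Fin n → ℝ,
            ((Matrix.submatrix (Function.update F (e (Fin.last k)) x) e id) * A).det
              = ∑ t, x t * w t := by
          intro x
          rw [Matrix.det_succ_row _ (Fin.last k)]
          have hterm : ∀ j : Fin (k+1),
              ((Matrix.submatrix (Function.update F (e (Fin.last k)) x) e id) * A) (Fin.last k) j
                = ∑ t, x t * A t j := by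
            intro j
            simp only [Matrix.mul_apply]
            show ∑ t, Function.update F (e (Fin.last k)) x (e (Fin.last k)) t * A t j = _
            simp only [Function.update_self]
          calc ∑ j : Fin (k+1), (-1 : ℝ) ^ ((Fin.last k : ℕ) + (j : ℕ)) *
                ((Matrix.submatrix (Function.update F (e (Fin.last k)) x) e id) * A) (Fin.last k) j *
                (((Matrix.submatrix (Function.update F (e (Fin.last k)) x) e id) * A).submatrix
                  (Fin.last k).succAbove j.succAbove).det
              = ∑ j : Fin (k+1), (-1 : ℝ) ^ ((Fin.last k : ℕ) + (j : ℕ)) *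
                (∑ t, x t * A t j) * mf j F := by
                refine Finset.sum_congr rfl fun j _ => ?_
                rw [hterm j, hminor (Function.update F (e (Fin.last k)) x) j]
                have := hmfF x j
                simp only [hmf] at this
                rw [this]
            _ = ∑ j : Fin (k+1), ∑ t, (-1 : ℝ) ^ ((Fin.last k : ℕ) + (j : ℕ)) *
                (x t * A t j) * mf j F := by
                refine Finset.sum_congr rfl fun j _ => ?_
                rw [Finset.mul_sum, Finset.sum_mul]
            _ = ∑ t, ∑ j : Fin (k+1), (-1 : ℝ) ^ ((Fin.last k : ℕ) + (j : ℕ)) *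
                (x t * A t j) * mf j F := Finset.sum_comm
            _ = ∑ t, x t * w t := by
                refine Finset.sum_congr rfl fun t _ => ?_
                rw [hw, Finset.mul_sum]
                refine Finset.sum_congr rfl fun j _ => ?_
                ring
        have hwne : w ≠ 0 := by
          intro hw0
          obtain ⟨j₀, hj₀⟩ := hC
          have hc0 : (fun j : Fin (k+1) =>
              (-1 : ℝ) ^ ((Fin.last k : ℕ) + (j : ℕ)) * mf j F) = 0 := by
            apply hA
            funext t
            have := congrFun hw0 t
            simp only [hw, Pi.zero_apply] at this ⊢
            simpa [Matrix.mulVec, dotProduct] using this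
          have := congrFun hc0 j₀
          simp only [Pi.zero_apply, mul_eq_zero] at this
          rcases this with h | h
          · exact absurd h (pow_ne_zero _ (by norm_num))
          · exact hj₀ h
        have hsubset : {x : Fin n → ℝ | Function.update F (e (Fin.last k)) x ∈ S}
            ⊆ {x : Fin n → ℝ | ∑ t, x t * w t = 0} := by
          intro x hx
          simp only [hS, Set.mem_inter_iff, Set.mem_setOf_eq] at hx
          show ∑ t, x t * w t = 0
          rw [← hdet x]
          exact hx.2
        exact measure_mono_null hsubset (hyperplane_null hwne)
      · have : {x : Fin n → ℝ | Function.update F (e (Fin.last k)) x ∈ S} = ∅ := by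
          ext x
          simp only [hS, Set.mem_inter_iff, Set.mem_setOf_eq, Set.mem_empty_iff_false,
            iff_false, not_and]
          intro hx
          exact absurd (by
            obtain ⟨⟨j, hj⟩, -⟩ := hx
            exact ⟨j, by rwa [hmfF x j] at hj⟩) hC
        exact measure_mono_null (Set.subset_empty_iff.mpr this) measure_empty

def pchain (dims : ℕ → ℕ) (d : ℕ)
    (H : ∀ i : Fin d, Matrix (Fin (dims (i + 1))) (Fin (dims i)) ℝ) :
    (t : ℕ) → t ≤ d → Matrix (Fin (dims t)) (Fin (dims 0)) ℝ
  | 0, _ => 1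
  | t + 1, h => H ⟨t, h⟩ * pchain dims d H t (Nat.le_of_succ_le h)

lemma pchain_castSucc (dims : ℕ → ℕ) (d : ℕ)
    (H : ∀ i : Fin (d + 1), Matrix (Fin (dims (i + 1))) (Fin (dims i)) ℝ) :
    ∀ (t : ℕ) (ht : t ≤ d), pchain dims d (fun i => H i.castSucc) t ht
      = pchain dims (d + 1) H t (le_trans ht (Nat.le_succ d)) := by
  intro t
  induction t with
  | zero => intro ht; rfl
  | succ t IHt =>
    intro ht
    simp only [pchain]
    rw [IHt]
    rfl

lemma chain_eq_pchain (dims : ℕ → ℕ) :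
    ∀ (d : ℕ) (H : ∀ i : Fin d, Matrix (Fin (dims (i + 1))) (Fin (dims i)) ℝ),
      chainProd dims d H = pchain dims d H d le_rfl := by
  intro d
  induction d with
  | zero => intro H; rfl
  | succ d IH =>
    intro H
    rw [show chainProd dims (d + 1) H
        = (show Matrix (Fin (dims (d + 1))) (Fin (dims d)) ℝ from H (Fin.last d)) *
          chainProd dims d (fun i => H i.castSucc) from rfl]
    rw [IH, pchain_castSucc]
    rfl

lemma measurable_pchain (dims : ℕ → ℕ) (d : ℕ) :
    ∀ (t : ℕ) (ht : t ≤ d), Measurable fun H : ∀ i : Fin d,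
      Matrix (Fin (dims (i + 1))) (Fin (dims i)) ℝ => pchain dims d H t ht := by
  intro t
  induction t with
  | zero => intro ht; exact measurable_const
  | succ t IHt =>
    intro ht
    have h1 : Measurable fun H : ∀ i : Fin d, Matrix (Fin (dims (i + 1))) (Fin (dims i)) ℝ =>
        H ⟨t, ht⟩ := measurable_pi_apply (⟨t, ht⟩ : Fin d)
    exact measurable_matrix_mul h1 (IHt (Nat.le_of_succ_le ht))

lemma inj_of_det_submatrix {a k : ℕ} (A : Matrix (Fin a) (Fin k) ℝ) (e : Fin k → Fin a)
    (h : (A.submatrix e id).det ≠ 0) : ∀ v, A.mulVec v = 0 → v = 0 := by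
  intro v hv
  have h2 : (A.submatrix e id).mulVec v = 0 := by
    funext r
    simp only [Matrix.mulVec, dotProduct, Matrix.submatrix_apply, id, Pi.zero_apply]
    exact congrFun hv (e r)
  have hu : IsUnit (A.submatrix e id).det := isUnit_iff_ne_zero.mpr h
  calc v = ((A.submatrix e id)⁻¹ * (A.submatrix e id)).mulVec v := by
        rw [Matrix.nonsing_inv_mul _ hu, Matrix.one_mulVec]
    _ = (A.submatrix e id)⁻¹.mulVec ((A.submatrix e id).mulVec v) :=
        (Matrix.mulVec_mulVec _ _ _).symm
    _ = 0 := by rw [h2, Matrix.mulVec_zero]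

lemma det_one_submatrix_ne (dims : ℕ → ℕ) (h : dims 0 ≤ dims 0) :
    (((1 : Matrix (Fin (dims 0)) (Fin (dims 0)) ℝ)).submatrix (Fin.castLE h) id).det ≠ 0 := by
  have hce : (Fin.castLE h : Fin (dims 0) → Fin (dims 0)) = id := by
    funext x; exact Fin.ext rfl
  rw [hce, Matrix.submatrix_id_id, Matrix.det_one]
  norm_num

lemma chain_ae (dims : ℕ → ℕ) (d : ℕ) (hge : ∀ i, i ≤ d → dims 0 ≤ dims i) :
    (Measure.pi fun i : Fin d => gaussMatrix (dims (i + 1)) (dims i))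
      {H | ((chainProd dims d H).submatrix (Fin.castLE (hge d le_rfl)) id).det = 0} = 0 := by
  classical
  have cover : {H : ∀ i : Fin d, Matrix (Fin (dims (i + 1))) (Fin (dims i)) ℝ |
        ((chainProd dims d H).submatrix (Fin.castLE (hge d le_rfl)) id).det = 0}
      ⊆ ⋃ j : Fin d, {H | ((pchain dims d H j (le_of_lt j.2)).submatrix
            (Fin.castLE (hge j (le_of_lt j.2))) id).det ≠ 0 ∧
          ((pchain dims d H (j + 1) j.2).submatrix (Fin.castLE (hge (j + 1) j.2)) id).det = 0} := by
    intro H hH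
    simp only [Set.mem_setOf_eq, chain_eq_pchain] at hH
    by_contra hc
    simp only [Set.mem_iUnion, Set.mem_setOf_eq, not_exists, not_and] at hc
    have hall : ∀ (t : ℕ) (ht : t ≤ d),
        ((pchain dims d H t ht).submatrix (Fin.castLE (hge t ht)) id).det ≠ 0 := by
      intro t
      induction t with
      | zero => intro ht; exact det_one_submatrix_ne dims (hge 0 ht)
      | succ t IHt =>
        intro ht
        exact hc ⟨t, ht⟩ (IHt (Nat.le_of_succ_le ht))
    exact hall d le_rfl hH
  refine measure_mono_null cover (measure_iUnion_null fun j => ?_)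
  have hmeas : MeasurableSet {H : ∀ i : Fin d, Matrix (Fin (dims (i + 1))) (Fin (dims i)) ℝ |
      ((pchain dims d H j (le_of_lt j.2)).submatrix
          (Fin.castLE (hge j (le_of_lt j.2))) id).det ≠ 0 ∧
      ((pchain dims d H (j + 1) j.2).submatrix (Fin.castLE (hge (j + 1) j.2)) id).det = 0} := by
    refine MeasurableSet.inter ?_ ?_
    · exact ((measurable_matrix_det (measurable_matrix_submatrix
        (measurable_pchain dims d j (le_of_lt j.2)) _ _)) (measurableSet_singleton 0)).compl
    · exact (measurable_matrix_det (measurable_matrix_submatrix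
        (measurable_pchain dims d (j + 1) j.2) _ _)) (measurableSet_singleton 0)
  apply pi_slice_null' (fun i : Fin d => gaussMatrix (dims (i + 1)) (dims i)) j hmeas
  intro f
  have key1 : ∀ (x : Matrix (Fin (dims (j + 1))) (Fin (dims j)) ℝ) (t : ℕ) (ht : t ≤ d),
      t ≤ (j : ℕ) → pchain dims d (Function.update f j x) t ht = pchain dims d f t ht := by
    intro x t
    induction t with
    | zero => intro ht _; rfl
    | succ t IHt =>
      intro ht htj
      simp only [pchain]
      have hne : (⟨t, ht⟩ : Fin d) ≠ j := by
        intro hcontra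
        have hval : t = (j : ℕ) := congrArg Fin.val hcontra
        omega
      rw [Function.update_of_ne hne, IHt _ (by omega)]
  have key2 : ∀ x : Matrix (Fin (dims (j + 1))) (Fin (dims j)) ℝ,
      pchain dims d (Function.update f j x) ((j : ℕ) + 1) j.2
        = x * pchain dims d f (j : ℕ) (le_of_lt j.2) := by
    intro x
    simp only [pchain]
    have hupd : Function.update f j x ⟨(j : ℕ), j.2⟩ = x := Function.update_self j x f
    rw [hupd, key1 x (j : ℕ) (le_of_lt j.2) le_rfl]
  by_cases h1 : ((pchain dims d f j (le_of_lt j.2)).submatrix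
      (Fin.castLE (hge j (le_of_lt j.2))) id).det = 0
  · have : {x | Function.update f j x ∈ {H : ∀ i : Fin d,
        Matrix (Fin (dims (i + 1))) (Fin (dims i)) ℝ |
        ((pchain dims d H j (le_of_lt j.2)).submatrix
            (Fin.castLE (hge j (le_of_lt j.2))) id).det ≠ 0 ∧
        ((pchain dims d H (j + 1) j.2).submatrix (Fin.castLE (hge (j + 1) j.2)) id).det = 0}}
        = ∅ := by
      ext x
      simp only [Set.mem_setOf_eq, Set.mem_empty_iff_false, iff_false, not_and]
      intro hx
      rw [key1 x (j : ℕ) (le_of_lt j.2) le_rfl] at hx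
      exact absurd h1 hx
    rw [this]
    exact measure_empty
  · set A := pchain dims d f (j : ℕ) (le_of_lt j.2) with hA
    have hAinj : ∀ v, A.mulVec v = 0 → v = 0 :=
      inj_of_det_submatrix A (Fin.castLE (hge j (le_of_lt j.2))) h1
    have hsubset : {x | Function.update f j x ∈ {H : ∀ i : Fin d,
        Matrix (Fin (dims (i + 1))) (Fin (dims i)) ℝ |
        ((pchain dims d H j (le_of_lt j.2)).submatrix
            (Fin.castLE (hge j (le_of_lt j.2))) id).det ≠ 0 ∧
        ((pchain dims d H (j + 1) j.2).submatrix (Fin.castLE (hge (j + 1) j.2)) id).det = 0}}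
        ⊆ {x : Matrix (Fin (dims ((j : ℕ) + 1))) (Fin (dims (j : ℕ))) ℝ |
            ((x.submatrix (Fin.castLE (hge ((j : ℕ) + 1) j.2)) id) * A).det = 0} := by
      intro x hx
      simp only [Set.mem_setOf_eq] at hx ⊢
      obtain ⟨-, hx2⟩ := hx
      rw [key2 x] at hx2
      rw [← hx2]
      rw [Matrix.submatrix_mul x A (Fin.castLE (hge ((j : ℕ) + 1) j.2)) id id
        Function.bijective_id, Matrix.submatrix_id_id]
    exact measure_mono_null hsubset (det_null (dims (j : ℕ)) (dims ((j : ℕ) + 1)) (dims 0) A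
      hAinj (Fin.castLE (hge ((j : ℕ) + 1) j.2)) (Fin.castLE_injective _))

/-- ℓ₀ recovery guarantee for a linear (identity-activation) multilayer
Gaussian generator `G(z) = H_d ⋯ H_1 z` with an independent Gaussian
measurement matrix `M`: if `l ≤ (m − 1 − k)/2` then with probability `1`, for
every ground truth `z₀` and every outlier vector `e` with `‖e‖₀ ≤ l`, setting
`y = M·G(z₀) + e`, `z₀` is the unique minimizer of `‖M·G(z) − y‖₀`. -/
theorem linear_generator_l0_recovery (d k m l : ℕ) (dims : ℕ → ℕ)
    (h0 : dims 0 = k) (hge : ∀ i < d, k ≤ dims i) (hlast : k < dims d)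
    (hl : (l : ℝ) ≤ ((m : ℝ) - 1 - k) / 2) :
    ((gaussMatrix m (dims d)).prod
        (Measure.pi fun i : Fin d => gaussMatrix (dims (i + 1)) (dims i)))
      {p : Matrix (Fin m) (Fin (dims d)) ℝ ×
          (∀ i : Fin d, Matrix (Fin (dims (i + 1))) (Fin (dims i)) ℝ) |
        ∀ z₀ : Fin (dims 0) → ℝ, ∀ e : Fin m → ℝ, l0 e ≤ l →
          ∀ z : Fin (dims 0) → ℝ, z ≠ z₀ →
            l0 (fun i => p.1.mulVec ((chainProd dims d p.2).mulVec z₀) i -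
                (p.1.mulVec ((chainProd dims d p.2).mulVec z₀) i + e i)) <
              l0 (fun i => p.1.mulVec ((chainProd dims d p.2).mulVec z) i -
                (p.1.mulVec ((chainProd dims d p.2).mulVec z₀) i + e i))} = 1 := by
  classical
  subst h0
  have hm : 2 * l + dims 0 + 1 ≤ m := by
    have h2 : (2 * l : ℝ) ≤ (m : ℝ) - 1 - dims 0 := by linarith
    have : ((2 * l + dims 0 + 1 : ℕ) : ℝ) ≤ (m : ℝ) := by push_cast; linarith
    exact_mod_cast this
  have hge' : ∀ i, i ≤ d → dims 0 ≤ dims i := by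
    intro i hi
    rcases lt_or_eq_of_le hi with h | h
    · exact hge i h
    · subst h; exact hlast.le
  set μM := gaussMatrix m (dims d) with hμM
  set μH := Measure.pi fun i : Fin d => gaussMatrix (dims (i + 1)) (dims i) with hμH
  set Tgt := {p : Matrix (Fin m) (Fin (dims d)) ℝ ×
      (∀ i : Fin d, Matrix (Fin (dims (i + 1))) (Fin (dims i)) ℝ) |
    ∀ z₀ : Fin (dims 0) → ℝ, ∀ e : Fin m → ℝ, l0 e ≤ l →
      ∀ z : Fin (dims 0) → ℝ, z ≠ z₀ →
        l0 (fun i => p.1.mulVec ((chainProd dims d p.2).mulVec z₀) i -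
            (p.1.mulVec ((chainProd dims d p.2).mulVec z₀) i + e i)) <
          l0 (fun i => p.1.mulVec ((chainProd dims d p.2).mulVec z) i -
            (p.1.mulVec ((chainProd dims d p.2).mulVec z₀) i + e i))} with hTgt
  set E := {q : Matrix (Fin m) (Fin (dims d)) ℝ ×
      (∀ i : Fin d, Matrix (Fin (dims (i + 1))) (Fin (dims i)) ℝ) |
    ∀ e : Fin (dims 0) → Fin m, Function.Injective e →
      ((q.1.submatrix e id) * chainProd dims d q.2).det ≠ 0} with hE
  have hchain_meas : Measurable fun H : ∀ i : Fin d,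
      Matrix (Fin (dims (i + 1))) (Fin (dims i)) ℝ => chainProd dims d H := by
    rw [show (fun H : ∀ i : Fin d, Matrix (Fin (dims (i + 1))) (Fin (dims i)) ℝ =>
        chainProd dims d H) = fun H => pchain dims d H d le_rfl from
      funext fun H => chain_eq_pchain dims d H]
    exact measurable_pchain dims d d le_rfl
  -- E has full measure
  have hEc : (μM.prod μH) Eᶜ = 0 := by
    have hsub : Eᶜ ⊆ ⋃ e : Fin (dims 0) → Fin m,
        {q : Matrix (Fin m) (Fin (dims d)) ℝ ×
            (∀ i : Fin d, Matrix (Fin (dims (i + 1))) (Fin (dims i)) ℝ) |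
          Function.Injective e ∧ ((q.1.submatrix e id) * chainProd dims d q.2).det = 0} := by
      intro q hq
      simp only [hE, Set.mem_compl_iff, Set.mem_setOf_eq, not_forall] at hq
      obtain ⟨e, he, hdet⟩ := hq
      exact Set.mem_iUnion.mpr ⟨e, he, not_not.mp hdet⟩
    refine measure_mono_null hsub (measure_iUnion_null fun e => ?_)
    by_cases he : Function.Injective e
    · have hmeas : MeasurableSet {q : Matrix (Fin m) (Fin (dims d)) ℝ ×
          (∀ i : Fin d, Matrix (Fin (dims (i + 1))) (Fin (dims i)) ℝ) |
          Function.Injective e ∧ ((q.1.submatrix e id) * chainProd dims d q.2).det = 0} := by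
        have h1 : Measurable fun q : Matrix (Fin m) (Fin (dims d)) ℝ ×
            (∀ i : Fin d, Matrix (Fin (dims (i + 1))) (Fin (dims i)) ℝ) =>
            ((q.1.submatrix e id) * chainProd dims d q.2).det :=
          measurable_matrix_det (measurable_matrix_mul
            (measurable_matrix_submatrix measurable_fst e id)
            (hchain_meas.comp measurable_snd))
        have : {q : Matrix (Fin m) (Fin (dims d)) ℝ ×
            (∀ i : Fin d, Matrix (Fin (dims (i + 1))) (Fin (dims i)) ℝ) |
            Function.Injective e ∧ ((q.1.submatrix e id) * chainProd dims d q.2).det = 0}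
            = {q | ((q.1.submatrix e id) * chainProd dims d q.2).det = 0} := by
          ext q; simp [he]
        rw [this]
        exact h1 (measurableSet_singleton 0)
      apply prod_null_right μM μH hmeas
      have hae : ∀ᵐ H ∂μH,
          ((chainProd dims d H).submatrix (Fin.castLE (hge' d le_rfl)) id).det ≠ 0 := by
        simp only [ae_iff, not_not]
        exact chain_ae dims d hge'
      filter_upwards [hae] with H hH
      have hA : ∀ v, (chainProd dims d H).mulVec v = 0 → v = 0 :=
        inj_of_det_submatrix _ _ hH
      have : {x : Matrix (Fin m) (Fin (dims d)) ℝ | (x, H) ∈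
          {q : Matrix (Fin m) (Fin (dims d)) ℝ ×
            (∀ i : Fin d, Matrix (Fin (dims (i + 1))) (Fin (dims i)) ℝ) |
            Function.Injective e ∧ ((q.1.submatrix e id) * chainProd dims d q.2).det = 0}}
          ⊆ {G : Matrix (Fin m) (Fin (dims d)) ℝ |
              ((G.submatrix e id) * chainProd dims d H).det = 0} := by
        intro x hx
        exact hx.2
      exact measure_mono_null this
        (det_null (dims d) m (dims 0) (chainProd dims d H) hA e he)
    · have : {q : Matrix (Fin m) (Fin (dims d)) ℝ ×
          (∀ i : Fin d, Matrix (Fin (dims (i + 1))) (Fin (dims i)) ℝ) |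
          Function.Injective e ∧ ((q.1.submatrix e id) * chainProd dims d q.2).det = 0}
          = ∅ := by
        ext q; simp [he]
      rw [this]; exact measure_empty
  -- E is contained in the target event
  have hET : E ⊆ Tgt := by
    intro q hq
    intro z₀ e0 he0 z hz
    set A := chainProd dims d q.2 with hA
    set M := q.1 with hM
    -- LHS equals l0 e0
    have hLHS : l0 (fun i => M.mulVec (A.mulVec z₀) i - (M.mulVec (A.mulVec z₀) i + e0 i))
        = l0 e0 := by
      unfold l0
      congr 1
      apply Finset.filter_congr
      intro i _
      simp [sub_add_cancel_left, neg_ne_zero]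
    set w := (M * A).mulVec (z - z₀) with hw
    have hgdef : ∀ i, M.mulVec (A.mulVec z) i - (M.mulVec (A.mulVec z₀) i + e0 i)
        = w i - e0 i := by
      intro i
      rw [hw, Matrix.mulVec_sub, Matrix.mulVec_mulVec, Matrix.mulVec_mulVec]
      simp only [Pi.sub_apply]
      ring
    have hv : z - z₀ ≠ 0 := sub_ne_zero.mpr hz
    set Z := Finset.univ.filter fun i => w i = 0 with hZ
    set N := Finset.univ.filter fun i => w i ≠ 0 with hN
    have hZcard : Z.card < dims 0 := by
      by_contra hge2
      push_neg at hge2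
      obtain ⟨T, hTZ, hTcard⟩ := Finset.exists_subset_card_eq hge2
      set e : Fin (dims 0) → Fin m := ⇑(T.orderEmbOfFin hTcard) with he'
      have heinj : Function.Injective e := (T.orderEmbOfFin hTcard).injective
      have hdet := hq e heinj
      have hB : ((M.submatrix e id) * A).mulVec (z - z₀) = 0 := by
        have hBsub : (M.submatrix e id) * A = (M * A).submatrix e id := by
          rw [Matrix.submatrix_mul M A e id id Function.bijective_id,
            Matrix.submatrix_id_id]
        rw [hBsub]
        funext r
        simp only [Matrix.mulVec, dotProduct, Matrix.submatrix_apply, id,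
          Pi.zero_apply]
        have hr : e r ∈ Z := hTZ (T.orderEmbOfFin_mem hTcard r)
        have : w (e r) = 0 := (Finset.mem_filter.mp hr).2
        simpa [hw, Matrix.mulVec, dotProduct] using this
      have : z - z₀ = 0 := by
        apply inj_of_det_submatrix ((M.submatrix e id) * A) id
        · rwa [Matrix.submatrix_id_id]
        · exact hB
      exact hv this
    have hNZ : N.card + Z.card = m := by
      have := Finset.card_filter_add_card_filter_not
        (s := (Finset.univ : Finset (Fin m))) (p := fun i => w i ≠ 0)
      simp only [Finset.card_univ, Fintype.card_fin, not_not] at this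
      rw [hN, hZ]
      convert this using 2
    have hsubN : N ⊆ (Finset.univ.filter fun i =>
        (M.mulVec (A.mulVec z) i - (M.mulVec (A.mulVec z₀) i + e0 i)) ≠ 0)
        ∪ (Finset.univ.filter fun i => e0 i ≠ 0) := by
      intro i hi
      have hwi : w i ≠ 0 := (Finset.mem_filter.mp hi).2
      by_contra hcon
      simp only [Finset.mem_union, Finset.mem_filter, Finset.mem_univ, true_and,
        not_or, not_not] at hcon
      obtain ⟨hg0, he00⟩ := hcon
      rw [hgdef i, he00, sub_zero] at hg0
      exact hwi hg0
    have hNle : N.card ≤ l0 (fun i => M.mulVec (A.mulVec z) i -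
        (M.mulVec (A.mulVec z₀) i + e0 i)) + l0 e0 :=
      le_trans (Finset.card_le_card hsubN) (Finset.card_union_le _ _)
    rw [hLHS]
    have he0l : l0 e0 ≤ l := he0
    unfold l0 at hNle he0l ⊢
    omega
  -- wrap up
  have hTc : (μM.prod μH) Tgtᶜ = 0 :=
    measure_mono_null (Set.compl_subset_compl.mpr hET) hEc
  have h1 : (μM.prod μH) Tgt ≤ 1 := prob_le_one
  have h2 : (1 : ENNReal) ≤ (μM.prod μH) Tgt := by
    calc (1 : ENNReal) = (μM.prod μH) Set.univ := (measure_univ).symm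
      _ = (μM.prod μH) (Tgt ∪ Tgtᶜ) := by rw [Set.union_compl_self]
      _ ≤ (μM.prod μH) Tgt + (μM.prod μH) Tgtᶜ := measure_union_le _ _
      _ = (μM.prod μH) Tgt := by rw [hTc, add_zero]
  exact le_antisymm h1 h2
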